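/- For all integers n ≥ 0, r_n = c_{n+1} - c_n. -/
import Mathlib

theorem stmt_9 (r a c d : ℕ → ℕ)
    (hr : ∀ n : ℕ, 2 ≤ n → r n = r (n - 1) + a n + c n + d n)
    (ha : ∀ n : ℕ, 2 ≤ n → a n = c (n - 1))
    (hc : ∀ n : ℕ, 2 ≤ n → c n = r (n - 1) + a (n - 1) + d n)
    (hd : ∀ n : ℕ, 2 ≤ n → d n = r (n - 2))
    (ha0 : a 0 = 0) (hc0 : c 0 = 0) (hd0 : d 0 = 0)
    (ha1 : a 1 = 0) (hd1 : d 1 = 0)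
    (hr0 : r 0 = 1) (hr1 : r 1 = 2) (hc1 : c 1 = 1) :
    ∀ n : ℕ, (r n : ℤ) = c (n + 1) - c n := by
  have key : ∀ n, c (n + 1) = r n + c n := by
    intro n
    induction n using Nat.strong_induction_on with
    | _ n ih =>
      match n with
      | 0 => simp [hc1, hr0, hc0]
      | 1 =>
        show c 2 = r 1 + c 1
        have h1 : c 2 = r 1 + a 1 + d 2 := hc 2 (by norm_num)
        have h2 : d 2 = r 0 := hd 2 (by norm_num)
        omega
      | (m+2) =>
        have h1 : c (m+3) = r (m+2) + a (m+2) + d (m+3) := hc (m+3) (by omega)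
        have h2 : a (m+2) = c (m+1) := ha (m+2) (by omega)
        have h3 : d (m+3) = r (m+1) := hd (m+3) (by omega)
        have h4 : c (m+2) = r (m+1) + c (m+1) := ih (m+1) (by omega)
        show c (m+3) = r (m+2) + c (m+2)
        omega
  intro n
  have := key n
  push_cast [this]
  ring
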